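/- Assume α₂ > α₃, A∞ > B and h₀ > 0. Then: (i) T(0) > 0; and (ii) the composite function U(z) := T(w(z)) is strictly decreasing on (z₀, ∞), in the sense that for all z₀ < z < z', if w ≥ 0 satisfies erf(w·√(α₁/α₂)) = H(z) and w' ≥ 0 satisfies erf(w'·√(α₁/α₂)) = H(z'), then T(w') < T(w). -/

import Mathlib

noncomputable section

/-- The error function `erf x = (2/√π) ∫₀ˣ exp(−s²) ds`. -/
def erf (x : ℝ) : ℝ := (2 / Real.sqrt Real.pi) * ∫ s in (0:ℝ)..x, Real.exp (-(s^2))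

/-- The complementary error function. -/
def erfc (x : ℝ) : ℝ := 1 - erf x

/-- Physical data of the three-phase Stefan problem: positive thermal conductivities,
specific heats, mass density, latent heats, and temperatures `B > C > D`. -/
structure Params where
  k₁ : ℝ
  k₂ : ℝ
  k₃ : ℝ
  c₁ : ℝ
  c₂ : ℝ
  c₃ : ℝ
  ρ : ℝ
  ℓ₁ : ℝ
  ℓ₂ : ℝ
  B : ℝ
  C : ℝ
  D : ℝ
  hk₁ : 0 < k₁
  hk₂ : 0 < k₂
  hk₃ : 0 < k₃
  hc₁ : 0 < c₁
  hc₂ : 0 < c₂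
  hc₃ : 0 < c₃
  hρ : 0 < ρ
  hℓ₁ : 0 < ℓ₁
  hℓ₂ : 0 < ℓ₂
  hBC : C < B
  hCD : D < C

namespace Params

/-- Thermal diffusivity of phase 1. -/
def α₁ (p : Params) : ℝ := p.k₁ / (p.ρ * p.c₁)

/-- Thermal diffusivity of phase 2. -/
def α₂ (p : Params) : ℝ := p.k₂ / (p.ρ * p.c₂)

/-- Thermal diffusivity of phase 3. -/
def α₃ (p : Params) : ℝ := p.k₃ / (p.ρ * p.c₃)

/-- Stefan number `Ste₁ = c₁(C−D)/ℓ₁`. -/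
def Ste₁ (p : Params) : ℝ := p.c₁ * (p.C - p.D) / p.ℓ₁

/-- Stefan number `Ste₂ = c₂(B−C)/ℓ₂`. -/
def Ste₂ (p : Params) : ℝ := p.c₂ * (p.B - p.C) / p.ℓ₂

/-- `φ(z) = z + (Ste₁/√π) exp(−z²)/erfc(z)`. -/
def φ (p : Params) (z : ℝ) : ℝ :=
  z + (p.Ste₁ / Real.sqrt Real.pi) * Real.exp (-(z^2)) / erfc z

/-- `H(z) = erf(z√(α₁/α₂)) − (Ste₂/√π)(ℓ₂/ℓ₁)√(k₂c₁/(k₁c₂)) exp(−z²α₁/α₂)/φ(z)`. -/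
def H (p : Params) (z : ℝ) : ℝ :=
  erf (z * Real.sqrt (p.α₁ / p.α₂)) -
    (p.Ste₂ / Real.sqrt Real.pi) * (p.ℓ₂ / p.ℓ₁) *
      Real.sqrt (p.k₂ * p.c₁ / (p.k₁ * p.c₂)) *
      (Real.exp (-(z^2) * (p.α₁ / p.α₂)) / p.φ z)

/-- `Q(z) = (ℓ₁/ℓ₂) φ(z) exp(z² α₁/α₂)`. -/
def Q (p : Params) (z : ℝ) : ℝ :=
  (p.ℓ₁ / p.ℓ₂) * p.φ z * Real.exp (z^2 * (p.α₁ / p.α₂))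

/-- The function `T` arising from the Robin (convective) boundary condition with
heat-transfer coefficient `h₀` and bulk temperature `Ainf`. -/
def T (p : Params) (h₀ Ainf : ℝ) (z : ℝ) : ℝ :=
  (p.Ste₂ / (Real.sqrt Real.pi * p.c₂)) * ((Ainf - p.B) / (p.B - p.C)) *
    Real.sqrt (p.k₃ * p.c₁ * p.c₃ / p.k₁) *
    (Real.exp (-(z^2) * p.α₁ * (1 / p.α₃ - 1 / p.α₂)) /
      (p.k₃ / (h₀ * Real.sqrt (Real.pi * p.α₃)) + erf (z * Real.sqrt (p.α₁ / p.α₃)))) -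
  z * Real.exp (z^2 * (p.α₁ / p.α₂))

/-- The function `V` arising from the Dirichlet boundary condition with temperature `A`. -/
def V (p : Params) (A : ℝ) (z : ℝ) : ℝ :=
  ((A - p.B) / p.ℓ₂) * Real.sqrt (p.c₁ * p.c₃ * p.k₃ / (Real.pi * p.k₁)) *
    (Real.exp (-(z^2) * (p.α₁ / p.α₃ - p.α₁ / p.α₂)) / erf (z * Real.sqrt (p.α₁ / p.α₃))) -
  z * Real.exp (z^2 * (p.α₁ / p.α₂))

/-- The function `P` arising from the Neumann boundary condition with flux coefficient `q₀`. -/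
def P (p : Params) (q₀ : ℝ) (z : ℝ) : ℝ :=
  Real.exp (z^2 * (p.α₁ / p.α₂)) *
    (-z + (q₀ / p.ℓ₂) * Real.sqrt (p.c₁ / (p.ρ * p.k₁)) * Real.exp (-(z^2) * (p.α₁ / p.α₃)))

/-- Critical heat-transfer coefficient `h₂`. -/
def h2 (p : Params) (Ainf z₀ : ℝ) : ℝ :=
  ((p.B - p.C) / (Ainf - p.B)) *
    Real.sqrt (p.k₂ * p.k₃ * p.c₂ / (Real.pi * p.c₃ * p.α₃)) *
    (1 / erf (z₀ * Real.sqrt (p.α₁ / p.α₂)))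

/-- Critical heat-flux coefficient `q₂`. -/
def q2 (p : Params) (z₀ : ℝ) : ℝ :=
  p.k₂ * (p.B - p.C) / (Real.sqrt (p.α₂ * Real.pi) * erf (z₀ * Real.sqrt (p.α₁ / p.α₂)))

end Params

section AuxLemmas

open Real MeasureTheory Set Filter

lemma gauss_cont : Continuous fun s : ℝ => Real.exp (-(s^2)) := by continuity

lemma gauss_integrable : Integrable fun s : ℝ => Real.exp (-(s^2)) := by
  have := integrable_exp_neg_mul_sq (one_pos)
  simpa [neg_mul] using this

lemma sqrt_pi_pos : 0 < Real.sqrt Real.pi := Real.sqrt_pos.2 Real.pi_pos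

lemma erf_zero : erf 0 = 0 := by simp [erf]

lemma erf_strictMono : StrictMono erf := by
  intro a b hab
  have h : erf b - erf a = (2 / Real.sqrt Real.pi) * ∫ s in a..b, Real.exp (-(s^2)) := by
    unfold erf
    rw [← mul_sub, intervalIntegral.integral_interval_sub_left
      (gauss_integrable.intervalIntegrable) (gauss_integrable.intervalIntegrable)]
  have hpos : 0 < ∫ s in a..b, Real.exp (-(s^2)) :=
    intervalIntegral.intervalIntegral_pos_of_pos (gauss_integrable.intervalIntegrable)
      (fun x => Real.exp_pos _) hab
  nlinarith [mul_pos (div_pos two_pos sqrt_pi_pos) hpos]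

lemma gauss_Ioi_zero : ∫ s in Ioi (0:ℝ), Real.exp (-(s^2)) = Real.sqrt Real.pi / 2 := by
  have := integral_gaussian_Ioi 1
  simpa [neg_mul] using this

lemma erfc_eq (x : ℝ) (hx : 0 ≤ x) :
    erfc x = (2 / Real.sqrt Real.pi) * ∫ s in Ioi x, Real.exp (-(s^2)) := by
  have hsplit : (∫ s in Ioc (0:ℝ) x, Real.exp (-(s^2))) + ∫ s in Ioi x, Real.exp (-(s^2))
      = ∫ s in Ioi (0:ℝ), Real.exp (-(s^2)) := by
    rw [← setIntegral_union (Ioc_disjoint_Ioi le_rfl) measurableSet_Ioi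
      gauss_integrable.integrableOn gauss_integrable.integrableOn,
      Ioc_union_Ioi_eq_Ioi hx]
  have h0x : (∫ s in (0:ℝ)..x, Real.exp (-(s^2))) = ∫ s in Ioc (0:ℝ) x, Real.exp (-(s^2)) :=
    intervalIntegral.integral_of_le hx
  unfold erfc erf
  rw [h0x]
  have h2 : (2 / Real.sqrt Real.pi) * (Real.sqrt Real.pi / 2) = 1 := by
    field_simp
  rw [gauss_Ioi_zero] at hsplit
  linear_combination (-(2/Real.sqrt Real.pi)) * hsplit - h2

lemma gauss_tail_pos (x : ℝ) : 0 < ∫ s in Ioi x, Real.exp (-(s^2)) := by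
  rw [setIntegral_pos_iff_support_of_nonneg_ae]
  · have : (Function.support fun s : ℝ => Real.exp (-(s^2))) = univ := by
      ext s; simp [Function.support, Real.exp_ne_zero]
    rw [this, univ_inter]
    simp [Real.volume_Ioi]
  · filter_upwards with s using (Real.exp_pos _).le
  · exact gauss_integrable.integrableOn

lemma erfc_pos (x : ℝ) (hx : 0 ≤ x) : 0 < erfc x := by
  rw [erfc_eq x hx]
  exact mul_pos (div_pos two_pos sqrt_pi_pos) (gauss_tail_pos x)

lemma erf_nonneg (x : ℝ) (hx : 0 ≤ x) : 0 ≤ erf x := by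
  rw [← erf_zero]; exact erf_strictMono.monotone hx

lemma gauss_moment_tail (z : ℝ) :
    ∫ s in Ioi z, s * Real.exp (-(s^2)) = Real.exp (-(z^2)) / 2 := by
  have hderiv : ∀ x ∈ Ici z, HasDerivAt (fun y : ℝ => -Real.exp (-(y^2)) / 2)
      (x * Real.exp (-(x^2))) x := by
    intro x _
    have h1 : HasDerivAt (fun y : ℝ => -(y^2)) (-(2*x)) x := by
      simpa using ((hasDerivAt_pow 2 x).fun_neg)
    have h2 := (Real.hasDerivAt_exp (-(x^2))).comp x h1
    have h3 := (h2.neg).div_const 2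
    refine h3.congr_deriv ?_
    ring
  have hint : IntegrableOn (fun s : ℝ => s * Real.exp (-(s^2))) (Ioi z) := by
    have := integrable_mul_exp_neg_mul_sq (one_pos)
    have h := this.integrableOn (s := Ioi z)
    simpa [neg_mul] using h
  have htend : Tendsto (fun y : ℝ => -Real.exp (-(y^2)) / 2) atTop (nhds 0) := by
    have h1 : Tendsto (fun y : ℝ => -(y^2)) atTop atBot := by
      simpa using (tendsto_pow_atTop (two_ne_zero)).neg
    have := (Real.tendsto_exp_atBot).comp h1
    have h2 := this.neg.div_const 2
    simpa using h2
  have := MeasureTheory.integral_Ioi_of_hasDerivAt_of_tendsto' hderiv hint htend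
  rw [this]; ring

lemma gauss_tail_le (z : ℝ) (hz : 0 < z) :
    ∫ s in Ioi z, Real.exp (-(s^2)) ≤ Real.exp (-(z^2)) / (2 * z) := by
  have hmono : ∫ s in Ioi z, Real.exp (-(s^2)) ≤ ∫ s in Ioi z, (s / z) * Real.exp (-(s^2)) := by
    apply setIntegral_mono_on gauss_integrable.integrableOn
    · have := integrable_mul_exp_neg_mul_sq (one_pos)
      have h := (this.integrableOn (s := Ioi z)).div_const z
      have heq : (fun s : ℝ => (s / z) * Real.exp (-(s^2)))
          = fun x : ℝ => x * Real.exp (-1 * x^2) / z := by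
        ext s; rw [neg_mul, one_mul]; ring
      rw [heq]; exact h
    · exact measurableSet_Ioi
    · intro s hs
      have h1 : (1:ℝ) ≤ s / z := (one_le_div hz).2 (le_of_lt hs)
      nlinarith [Real.exp_pos (-(s^2))]
  have hcalc : ∫ s in Ioi z, (s / z) * Real.exp (-(s^2))
      = (∫ s in Ioi z, s * Real.exp (-(s^2))) / z := by
    rw [← integral_div]
    congr 1; ext s; ring
  rw [hcalc, gauss_moment_tail] at hmono
  calc ∫ s in Ioi z, Real.exp (-(s^2)) ≤ Real.exp (-(z^2)) / 2 / z := hmono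
    _ = Real.exp (-(z^2)) / (2 * z) := by ring

lemma erfc_le (z : ℝ) (hz : 0 < z) :
    erfc z ≤ Real.exp (-(z^2)) / (Real.sqrt Real.pi * z) := by
  rw [erfc_eq z hz.le]
  have := gauss_tail_le z hz
  have h2 : (0:ℝ) < 2 / Real.sqrt Real.pi := div_pos two_pos sqrt_pi_pos
  calc (2 / Real.sqrt Real.pi) * ∫ s in Ioi z, Real.exp (-(s^2))
      ≤ (2 / Real.sqrt Real.pi) * (Real.exp (-(z^2)) / (2 * z)) := by
        exact mul_le_mul_of_nonneg_left this h2.le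
    _ = Real.exp (-(z^2)) / (Real.sqrt Real.pi * z) := by
        field_simp

lemma erf_hasDerivAt (x : ℝ) :
    HasDerivAt erf ((2 / Real.sqrt Real.pi) * Real.exp (-(x^2))) x := by
  have h := intervalIntegral.integral_hasDerivAt_right
    (gauss_integrable.intervalIntegrable (a := 0) (b := x))
    (gauss_cont.stronglyMeasurable.stronglyMeasurableAtFilter)
    gauss_cont.continuousAt
  exact h.const_mul (2 / Real.sqrt Real.pi)

lemma erfc_hasDerivAt (x : ℝ) :
    HasDerivAt erfc (-((2 / Real.sqrt Real.pi) * Real.exp (-(x^2)))) x :=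
  (erf_hasDerivAt x).const_sub 1

def hfun (x : ℝ) : ℝ := Real.exp (x^2) * erfc x

lemma hfun_pos (x : ℝ) (hx : 0 ≤ x) : 0 < hfun x :=
  mul_pos (Real.exp_pos _) (erfc_pos x hx)

lemma hfun_hasDerivAt (x : ℝ) :
    HasDerivAt hfun (2*x*Real.exp (x^2)*erfc x - 2/Real.sqrt Real.pi) x := by
  have h1 : HasDerivAt (fun y : ℝ => Real.exp (y^2)) (Real.exp (x^2) * (2*x)) x := by
    have := (Real.hasDerivAt_exp (x^2)).comp x (hasDerivAt_pow 2 x)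
    simpa [Function.comp_def] using this
  have h2 := h1.mul (erfc_hasDerivAt x)
  have key : Real.exp (x^2) * Real.exp (-(x^2)) = 1 := by
    rw [← Real.exp_add]; simp
  refine h2.congr_deriv ?_; symm
  linear_combination (2/Real.sqrt Real.pi) * key

lemma hfun_antitoneOn : AntitoneOn hfun (Ici (0:ℝ)) := by
  apply antitoneOn_of_deriv_nonpos (convex_Ici 0)
  · exact fun x _ => (hfun_hasDerivAt x).continuousAt.continuousWithinAt
  · intro x _
    exact (hfun_hasDerivAt x).differentiableAt.differentiableWithinAt
  · intro x hx
    rw [interior_Ici] at hx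
    rw [(hfun_hasDerivAt x).deriv]
    have hb := erfc_le x hx
    have hx' : (0:ℝ) < x := hx
    have hx2 : 0 < 2 * x * Real.exp (x^2) := by
      have := Real.exp_pos (x^2); nlinarith
    have h3 : 2*x*Real.exp (x^2)*erfc x
        ≤ 2*x*Real.exp (x^2) * (Real.exp (-(x^2)) / (Real.sqrt Real.pi * x)) :=
      mul_le_mul_of_nonneg_left hb hx2.le
    have h4 : 2*x*Real.exp (x^2) * (Real.exp (-(x^2)) / (Real.sqrt Real.pi * x))
        = 2 / Real.sqrt Real.pi := by
      rw [Real.exp_neg]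
      have h5 := (Real.exp_pos (x^2)).ne'
      have h6 := sqrt_pi_pos.ne'
      field_simp
    linarith [h4 ▸ h3]

lemma ratio_mono {a b : ℝ} (ha : 0 ≤ a) (hab : a ≤ b) :
    Real.exp (-(a^2)) / erfc a ≤ Real.exp (-(b^2)) / erfc b := by
  have hb0 : 0 ≤ b := ha.trans hab
  have hha : 0 < hfun a := hfun_pos a ha
  have hhb : 0 < hfun b := hfun_pos b hb0
  have hmono : hfun b ≤ hfun a := hfun_antitoneOn ha hb0 hab
  have e1 : Real.exp (-(a^2)) / erfc a = 1 / hfun a := by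
    unfold hfun
    rw [Real.exp_neg]
    field_simp
  have e2 : Real.exp (-(b^2)) / erfc b = 1 / hfun b := by
    unfold hfun
    rw [Real.exp_neg]
    field_simp
  rw [e1, e2]
  exact one_div_le_one_div_of_le hhb hmono

namespace Params

variable (p : Params)

lemma α₁_pos : 0 < p.α₁ := div_pos p.hk₁ (mul_pos p.hρ p.hc₁)
lemma α₂_pos : 0 < p.α₂ := div_pos p.hk₂ (mul_pos p.hρ p.hc₂)
lemma α₃_pos : 0 < p.α₃ := div_pos p.hk₃ (mul_pos p.hρ p.hc₃)
lemma Ste₁_pos : 0 < p.Ste₁ := div_pos (mul_pos p.hc₁ (sub_pos.2 p.hCD)) p.hℓ₁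
lemma Ste₂_pos : 0 < p.Ste₂ := div_pos (mul_pos p.hc₂ (sub_pos.2 p.hBC)) p.hℓ₂

lemma φ_pos {z : ℝ} (hz : 0 < z) : 0 < p.φ z := by
  unfold Params.φ
  have h1 : 0 < p.Ste₁ / Real.sqrt Real.pi * Real.exp (-(z^2)) / erfc z :=
    div_pos (mul_pos (div_pos p.Ste₁_pos sqrt_pi_pos) (Real.exp_pos _)) (erfc_pos z hz.le)
  linarith

lemma φ_mono {a b : ℝ} (ha : 0 ≤ a) (hab : a ≤ b) : p.φ a ≤ p.φ b := by
  unfold Params.φ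
  have hc : 0 ≤ p.Ste₁ / Real.sqrt Real.pi := (div_pos p.Ste₁_pos sqrt_pi_pos).le
  have := ratio_mono ha hab
  have h2 : p.Ste₁ / Real.sqrt Real.pi * Real.exp (-(a^2)) / erfc a
      ≤ p.Ste₁ / Real.sqrt Real.pi * Real.exp (-(b^2)) / erfc b := by
    rw [mul_div_assoc, mul_div_assoc]
    exact mul_le_mul_of_nonneg_left this hc
  linarith

lemma H_strictMonoOn {a b : ℝ} (ha : 0 < a) (hab : a < b) : p.H a < p.H b := by
  unfold Params.H
  have hr : 0 < p.α₁ / p.α₂ := div_pos p.α₁_pos p.α₂_pos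
  have hsr : 0 < Real.sqrt (p.α₁ / p.α₂) := Real.sqrt_pos.2 hr
  have h1 : erf (a * Real.sqrt (p.α₁ / p.α₂)) < erf (b * Real.sqrt (p.α₁ / p.α₂)) :=
    erf_strictMono (mul_lt_mul_of_pos_right hab hsr)
  have hsq : a^2 < b^2 := by nlinarith
  have hE : Real.exp (-(b^2) * (p.α₁ / p.α₂)) < Real.exp (-(a^2) * (p.α₁ / p.α₂)) := by
    apply Real.exp_lt_exp.2; nlinarith
  have hφa := p.φ_pos ha
  have hφb := p.φ_pos (ha.trans hab)
  have hφ := p.φ_mono ha.le hab.le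
  have hK : 0 ≤ p.Ste₂ / Real.sqrt Real.pi * (p.ℓ₂ / p.ℓ₁) *
      Real.sqrt (p.k₂ * p.c₁ / (p.k₁ * p.c₂)) :=
    mul_nonneg (mul_nonneg (div_pos p.Ste₂_pos sqrt_pi_pos).le
      (div_pos p.hℓ₂ p.hℓ₁).le) (Real.sqrt_nonneg _)
  have hfrac : Real.exp (-(b^2) * (p.α₁ / p.α₂)) / p.φ b
      < Real.exp (-(a^2) * (p.α₁ / p.α₂)) / p.φ a :=
    calc Real.exp (-(b^2) * (p.α₁ / p.α₂)) / p.φ b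
        ≤ Real.exp (-(b^2) * (p.α₁ / p.α₂)) / p.φ a :=
          div_le_div_of_nonneg_left (Real.exp_pos _).le hφa hφ
      _ < Real.exp (-(a^2) * (p.α₁ / p.α₂)) / p.φ a := by
          exact div_lt_div_of_pos_right hE hφa
  linarith [mul_le_mul_of_nonneg_left hfrac.le hK]

lemma T_zero_pos (h₀ Ainf : ℝ) (hAinf : p.B < Ainf) (hh₀ : 0 < h₀) :
    0 < p.T h₀ Ainf 0 := by
  unfold Params.T
  have hM : 0 < p.k₃ / (h₀ * Real.sqrt (Real.pi * p.α₃)) :=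
    div_pos p.hk₃ (mul_pos hh₀ (Real.sqrt_pos.2 (mul_pos Real.pi_pos p.α₃_pos)))
  have hC : 0 < p.Ste₂ / (Real.sqrt Real.pi * p.c₂) * ((Ainf - p.B) / (p.B - p.C)) *
      Real.sqrt (p.k₃ * p.c₁ * p.c₃ / p.k₁) :=
    mul_pos (mul_pos (div_pos p.Ste₂_pos (mul_pos sqrt_pi_pos p.hc₂))
      (div_pos (sub_pos.2 hAinf) (sub_pos.2 p.hBC)))
      (Real.sqrt_pos.2 (div_pos (mul_pos (mul_pos p.hk₃ p.hc₁) p.hc₃) p.hk₁))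
  simp only [zero_pow, neg_zero, zero_mul, Real.exp_zero, erf_zero, add_zero, mul_zero,
    sub_zero, ne_eq, OfNat.ofNat_ne_zero, not_false_eq_true]
  exact mul_pos hC (by positivity)

lemma T_strictAnti (h₀ Ainf : ℝ) (hα : p.α₃ < p.α₂) (hAinf : p.B < Ainf) (hh₀ : 0 < h₀)
    {a b : ℝ} (ha : 0 ≤ a) (hab : a < b) : p.T h₀ Ainf b < p.T h₀ Ainf a := by
  unfold Params.T
  have hM : 0 < p.k₃ / (h₀ * Real.sqrt (Real.pi * p.α₃)) :=
    div_pos p.hk₃ (mul_pos hh₀ (Real.sqrt_pos.2 (mul_pos Real.pi_pos p.α₃_pos)))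
  have hd : 0 < 1 / p.α₃ - 1 / p.α₂ := by
    have h1 : 1/p.α₂ < 1/p.α₃ := one_div_lt_one_div_of_lt p.α₃_pos hα
    linarith
  have hsq : a^2 < b^2 := by nlinarith
  have hα₁ := p.α₁_pos
  have hN : Real.exp (-(b^2) * p.α₁ * (1/p.α₃ - 1/p.α₂))
      < Real.exp (-(a^2) * p.α₁ * (1/p.α₃ - 1/p.α₂)) := by
    apply Real.exp_lt_exp.2
    nlinarith [mul_pos (mul_pos (sub_pos.2 hsq) hα₁) hd]
  have hs3 : 0 < Real.sqrt (p.α₁/p.α₃) := Real.sqrt_pos.2 (div_pos p.α₁_pos p.α₃_pos)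
  have hDa : 0 < p.k₃ / (h₀ * Real.sqrt (Real.pi * p.α₃))
      + erf (a * Real.sqrt (p.α₁ / p.α₃)) := by
    have := erf_nonneg (a * Real.sqrt (p.α₁/p.α₃)) (mul_nonneg ha hs3.le)
    linarith
  have hD : p.k₃ / (h₀ * Real.sqrt (Real.pi * p.α₃)) + erf (a * Real.sqrt (p.α₁ / p.α₃))
      ≤ p.k₃ / (h₀ * Real.sqrt (Real.pi * p.α₃)) + erf (b * Real.sqrt (p.α₁ / p.α₃)) := by
    have : erf (a * Real.sqrt (p.α₁/p.α₃)) ≤ erf (b * Real.sqrt (p.α₁/p.α₃)) :=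
      (erf_strictMono (mul_lt_mul_of_pos_right hab hs3)).le
    linarith
  have hfrac : Real.exp (-(b^2) * p.α₁ * (1/p.α₃ - 1/p.α₂)) /
        (p.k₃ / (h₀ * Real.sqrt (Real.pi * p.α₃)) + erf (b * Real.sqrt (p.α₁ / p.α₃)))
      < Real.exp (-(a^2) * p.α₁ * (1/p.α₃ - 1/p.α₂)) /
        (p.k₃ / (h₀ * Real.sqrt (Real.pi * p.α₃)) + erf (a * Real.sqrt (p.α₁ / p.α₃))) :=
    calc _ ≤ Real.exp (-(b^2) * p.α₁ * (1/p.α₃ - 1/p.α₂)) /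
          (p.k₃ / (h₀ * Real.sqrt (Real.pi * p.α₃)) + erf (a * Real.sqrt (p.α₁ / p.α₃))) :=
        div_le_div_of_nonneg_left (Real.exp_pos _).le hDa hD
      _ < _ := div_lt_div_of_pos_right hN hDa
  have hC : 0 < p.Ste₂ / (Real.sqrt Real.pi * p.c₂) * ((Ainf - p.B) / (p.B - p.C)) *
      Real.sqrt (p.k₃ * p.c₁ * p.c₃ / p.k₁) :=
    mul_pos (mul_pos (div_pos p.Ste₂_pos (mul_pos sqrt_pi_pos p.hc₂))
      (div_pos (sub_pos.2 hAinf) (sub_pos.2 p.hBC)))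
      (Real.sqrt_pos.2 (div_pos (mul_pos (mul_pos p.hk₃ p.hc₁) p.hc₃) p.hk₁))
  have hterm2 : a * Real.exp (a^2 * (p.α₁/p.α₂)) ≤ b * Real.exp (b^2 * (p.α₁/p.α₂)) := by
    have hr : 0 < p.α₁/p.α₂ := div_pos p.α₁_pos p.α₂_pos
    have he : Real.exp (a^2 * (p.α₁/p.α₂)) ≤ Real.exp (b^2 * (p.α₁/p.α₂)) := by
      apply Real.exp_le_exp.2; nlinarith
    exact mul_le_mul hab.le he (Real.exp_pos _).le (ha.trans hab.le)
  have hmain := mul_lt_mul_of_pos_left hfrac hC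
  linarith

end Params


end AuxLemmas

/-- under `α₂ > α₃`, `A∞ > B`, `h₀ > 0`: (i) `T(0) > 0`; (ii) the composite
function `U = T ∘ w` is strictly decreasing on `(z₀, ∞)`. -/
theorem T_pos_and_U_strictAnti (p : Params) (h₀ Ainf z₀ : ℝ)
    (hα : p.α₃ < p.α₂) (hAinf : p.B < Ainf) (hh₀ : 0 < h₀)
    (hz₀ : 0 < z₀ ∧ p.H z₀ = 0) :
    0 < p.T h₀ Ainf 0 ∧
    ∀ z z' w w' : ℝ, z₀ < z → z < z' → 0 ≤ w → 0 ≤ w' →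
      erf (w * Real.sqrt (p.α₁ / p.α₂)) = p.H z →
      erf (w' * Real.sqrt (p.α₁ / p.α₂)) = p.H z' →
      p.T h₀ Ainf w' < p.T h₀ Ainf w := by
  obtain ⟨hz₀pos, -⟩ := hz₀
  refine ⟨p.T_zero_pos h₀ Ainf hAinf hh₀, ?_⟩
  intro z z' w w' hz hzz' hw hw' hwz hwz'
  have hz0 : 0 < z := hz₀pos.trans hz
  have hHH : p.H z < p.H z' := p.H_strictMonoOn hz0 hzz'
  have hsr : 0 < Real.sqrt (p.α₁ / p.α₂) :=
    Real.sqrt_pos.2 (div_pos p.α₁_pos p.α₂_pos)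
  have herf : erf (w * Real.sqrt (p.α₁ / p.α₂)) < erf (w' * Real.sqrt (p.α₁ / p.α₂)) := by
    rw [hwz, hwz']; exact hHH
  have hww' : w < w' := by
    by_contra hc
    push_neg at hc
    exact absurd herf (not_lt.2 (erf_strictMono.monotone
      (mul_le_mul_of_nonneg_right hc hsr.le)))
  exact p.T_strictAnti h₀ Ainf hα hAinf hh₀ hw hww'
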